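/- Let x* ∈ C be a fixed point of PGD with step η > 0, i.e., x* = P_C(x* - η Aᵀ(A x* - b)). Then there exists γ ∈ R^N with Aᵀ(A x* - b) = (diag(γ) ⊗ I_2) x* and γ_i ≤ 1/η for all i, with γ_i < 1/η whenever S_i(x*) ≠ [1,0]ᵀ. -/

import Mathlib

open Matrix

/-- Euclidean norm of the `i`-th coordinate pair. -/
noncomputable def pairNorm {N : ℕ} (y : Fin N × Fin 2 → ℝ) (i : Fin N) : ℝ :=
  Real.sqrt (y (i, 0) ^ 2 + y (i, 1) ^ 2)

open Classical in
/-- Coordinatewise projection onto the unit-modulus set: each coordinate pair is projected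
onto the unit circle, with the convention that the zero pair maps to `[1, 0]ᵀ`. -/
noncomputable def umProj {N : ℕ} (y : Fin N × Fin 2 → ℝ) : Fin N × Fin 2 → ℝ :=
  fun p =>
    if y (p.1, 0) = 0 ∧ y (p.1, 1) = 0 then (if p.2 = 0 then 1 else 0)
    else y p / pairNorm y p.1

theorem fixed_point_is_stationary {M N : ℕ}
    (A : Matrix (Fin M × Fin 2) (Fin N × Fin 2) ℝ) (b : Fin M × Fin 2 → ℝ)
    (x : Fin N × Fin 2 → ℝ) (hx : ∀ i, x (i, 0) ^ 2 + x (i, 1) ^ 2 = 1)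
    (η : ℝ) (hη : 0 < η)
    (hfix : umProj (x - η • (Aᵀ *ᵥ (A *ᵥ x - b))) = x) :
    ∃ γ : Fin N → ℝ,
      (Aᵀ *ᵥ (A *ᵥ x - b)) = (fun p => γ p.1 * x p) ∧
      ∀ i, γ i ≤ 1 / η ∧ (¬(x (i, 0) = 1 ∧ x (i, 1) = 0) → γ i < 1 / η) := by
  classical
  set g : Fin N × Fin 2 → ℝ := Aᵀ *ᵥ (A *ᵥ x - b) with hg
  set y : Fin N × Fin 2 → ℝ := x - η • g with hy
  have hyval : ∀ p, y p = x p - η * g p := by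
    intro p; simp [hy, smul_eq_mul]
  have hfix' : ∀ p, umProj y p = x p := fun p => congrFun hfix p
  have hrpos : ∀ i : Fin N, ¬(y (i,0) = 0 ∧ y (i,1) = 0) → 0 < pairNorm y i := by
    intro i h
    have hsum : 0 < y (i,0) ^ 2 + y (i,1) ^ 2 := by
      rcases not_and_or.mp h with h0 | h1
      · have := sq_pos_of_ne_zero h0
        nlinarith [sq_nonneg (y (i,1))]
      · have := sq_pos_of_ne_zero h1
        nlinarith [sq_nonneg (y (i,0))]
    exact Real.sqrt_pos.mpr hsum
  refine ⟨fun i => if y (i,0) = 0 ∧ y (i,1) = 0 then 1/η else (1 - pairNorm y i)/η, ?_, ?_⟩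
  · funext p
    obtain ⟨i, j⟩ := p
    by_cases h : y (i,0) = 0 ∧ y (i,1) = 0
    · have hyij : y (i,j) = 0 := by fin_cases j <;> [exact h.1; exact h.2]
      have h1 := hyval (i,j)
      rw [hyij] at h1
      simp only [h, and_self, if_true]
      field_simp
      linarith
    · have hr := hrpos i h
      have hxij : x (i,j) = y (i,j) / pairNorm y i := by
        have := hfix' (i,j)
        simpa [umProj, h] using this.symm
      have h1 := hyval (i,j)
      have h2 : y (i,j) = pairNorm y i * x (i,j) := by
        rw [hxij]; field_simp
      simp only [h, if_false]
      have : η * g (i,j) = (1 - pairNorm y i) * x (i,j) := by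
        rw [h2] at h1; linarith
      field_simp
      linarith
  · intro i
    by_cases h : y (i,0) = 0 ∧ y (i,1) = 0
    · simp only [h, if_true]
      refine ⟨le_refl _, ?_⟩
      intro hc
      exfalso
      apply hc
      constructor
      · have := hfix' (i,0)
        simpa [umProj, h] using this.symm
      · have := hfix' (i,1)
        simpa [umProj, h] using this.symm
    · have hr := hrpos i h
      simp only [h, if_false]
      constructor
      · have : (1 - pairNorm y i)/η < 1/η := by
          rw [div_lt_div_iff₀ hη hη]; nlinarith
        linarith
      · intro _
        rw [div_lt_div_iff₀ hη hη]; nlinarith
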